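/- Let X ⊂ ℝⁿ be a finite set of points with sup_{x∈X} ‖x‖ ≤ R, let C_R = conv(f_R(X ∪ {0})) and let S_R be the closure of the set difference of the closed ball B(0,2R) and the preimage f_R⁻¹(C_R). Then S_R is starshaped with respect to the origin: for every x ∈ S_R and s ∈ [0,1], s·x ∈ S_R. -/

import Mathlib

noncomputable def sphereFlip {n : ℕ} (R : ℝ) (x : EuclideanSpace ℝ (Fin n)) :
    EuclideanSpace ℝ (Fin n) :=
  ((2 * R - ‖x‖) / ‖x‖) • x

noncomputable def starSet {n : ℕ} (R : ℝ) (X : Set (EuclideanSpace ℝ (Fin n))) :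
    Set (EuclideanSpace ℝ (Fin n)) :=
  closure (Metric.closedBall 0 (2 * R) \
    sphereFlip R ⁻¹' (convexHull ℝ (sphereFlip R '' (X ∪ {0}))))

lemma sphereFlip_zero {n : ℕ} (R : ℝ) : sphereFlip (n := n) R 0 = 0 := by
  simp [sphereFlip]

lemma smul_mem_starDiff {n : ℕ} {R : ℝ} (X : Set (EuclideanSpace ℝ (Fin n)))
    {s : ℝ} (hs0 : 0 < s) (hs1 : s ≤ 1) {y : EuclideanSpace ℝ (Fin n)}
    (hy : y ∈ Metric.closedBall 0 (2 * R) \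
      sphereFlip R ⁻¹' (convexHull ℝ (sphereFlip R '' (X ∪ {0})))) :
    s • y ∈ Metric.closedBall 0 (2 * R) \
      sphereFlip R ⁻¹' (convexHull ℝ (sphereFlip R '' (X ∪ {0}))) := by
  obtain ⟨hball, hpre⟩ := hy
  rw [Metric.mem_closedBall, dist_zero_right] at hball
  have hyne : y ≠ 0 := by
    rintro rfl
    exact hpre (by
      rw [Set.mem_preimage, sphereFlip_zero]
      exact subset_convexHull ℝ _ ⟨0, Or.inr rfl, sphereFlip_zero R⟩)
  have hy0 : 0 < ‖y‖ := norm_pos_iff.mpr hyne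
  rcases eq_or_lt_of_le hs1 with rfl | hs1'
  · rw [one_smul]
    exact ⟨by rwa [Metric.mem_closedBall, dist_zero_right], hpre⟩
  constructor
  · rw [Metric.mem_closedBall, dist_zero_right, norm_smul, Real.norm_eq_abs,
      abs_of_pos hs0]
    nlinarith
  · intro h
    rw [Set.mem_preimage] at h
    apply hpre
    have hsy : ‖s • y‖ = s * ‖y‖ := by
      rw [norm_smul, Real.norm_eq_abs, abs_of_pos hs0]
    have hden : 0 < 2 * R - s * ‖y‖ := by nlinarith
    have hdne : 2 * R - s * ‖y‖ ≠ 0 := ne_of_gt hden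
    have hyne' : ‖y‖ ≠ 0 := ne_of_gt hy0
    have hsne : s ≠ 0 := ne_of_gt hs0
    set t : ℝ := (2 * R - ‖y‖) / (2 * R - s * ‖y‖) with ht
    have hscal : (2 * R - ‖y‖) / (2 * R - s * ‖y‖) * ((2 * R - s * ‖y‖) / (s * ‖y‖)) * s
        = (2 * R - ‖y‖) / ‖y‖ := by
      rw [div_mul_div_cancel₀ hdne]
      field_simp
    have hteq : sphereFlip R y = t • sphereFlip R (s • y) := by
      unfold sphereFlip
      rw [hsy, smul_smul, smul_smul, ht, hscal]
    rw [Set.mem_preimage, hteq]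
    refine (convex_convexHull ℝ _).smul_mem_of_zero_mem ?_ h ⟨?_, ?_⟩
    · exact subset_convexHull ℝ _ ⟨0, Or.inr rfl, sphereFlip_zero R⟩
    · exact div_nonneg (by linarith) hden.le
    · rw [div_le_one hden]
      nlinarith

theorem starSet_starshaped {n : ℕ} (R : ℝ) (hR : 0 < R)
    (X : Set (EuclideanSpace ℝ (Fin n))) (hX : X.Finite)
    (hXR : ∀ x ∈ X, ‖x‖ ≤ R) :
    ∀ x ∈ starSet R X, ∀ s ∈ Set.Icc (0 : ℝ) 1, s • x ∈ starSet R X := by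
  intro x hx s hs
  set D := Metric.closedBall (0 : EuclideanSpace ℝ (Fin n)) (2 * R) \
      sphereFlip R ⁻¹' (convexHull ℝ (sphereFlip R '' (X ∪ {0}))) with hD
  rcases eq_or_lt_of_le hs.1 with rfl | hs0
  · -- s = 0 : need 0 ∈ closure D
    rw [zero_smul]
    have hne : D.Nonempty := by
      by_contra hemp
      rw [Set.not_nonempty_iff_eq_empty] at hemp
      have hx' : x ∈ closure D := hx
      rw [hemp, closure_empty] at hx'
      exact hx'
    obtain ⟨z, hz⟩ := hne
    have htend : Filter.Tendsto (fun k : ℕ => (1 / (k + 1) : ℝ) • z)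
        Filter.atTop (nhds 0) := by
      have := (tendsto_one_div_add_atTop_nhds_zero_nat (𝕜 := ℝ)).smul_const z
      simpa using this
    refine mem_closure_of_tendsto htend ?_
    filter_upwards with k
    exact smul_mem_starDiff X (by positivity) (by
      rw [div_le_one (by positivity)]; linarith [Nat.cast_nonneg (α := ℝ) k]) hz
  · exact map_mem_closure (continuous_const_smul s) hx
      (fun y hy => smul_mem_starDiff X hs0 hs.2 hy)
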